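/- arXiv:1102.3362 — 2 statements merged into one kernel-verified Lean document; each statement's English description precedes it below -/
import Mathlib

section
/- Let (f_n) be a sequence of holomorphic functions on an open connected domain G ⊆ ℂ such that Σ_n |f_n(s)| converges for almost every s ∈ G (with respect to planar Lebesgue measure) and the function Φ(s) = Σ_n |f_n(s)| is locally integrable on G. Then Σ_n f_n converges uniformly on every compact subset of G, and in particular the sum is holomorphic on G. -/
open MeasureTheory Filter

section Auxiliary

open Metric Real Set

private lemma polar_circleMap (c : ℂ) (ρ θ : ℝ) :
    c + Complex.polarCoord.symm (ρ, θ) = circleMap c ρ θ := by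
  simp [circleMap, Complex.exp_mul_I]

private lemma circle_mean {U : Set ℂ} {g : ℂ → ℂ} (hg : DifferentiableOn ℂ g U)
    {c : ℂ} {ρ : ℝ} (hρ : 0 < ρ) (hball : closedBall c ρ ⊆ U) :
    2 * π * ‖g c‖ ≤ ∫ θ in (0:ℝ)..(2*π), ‖g (circleMap c ρ θ)‖ := by
  have hd : DiffContOnCl ℂ g (ball c ρ) := by
    apply DifferentiableOn.diffContOnCl
    rw [closure_ball c hρ.ne']
    exact hg.mono hball
  have hc := hd.circleIntegral_sub_inv_smul (mem_ball_self hρ)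
  have h2 : ‖(2 * (π:ℂ) * Complex.I) • g c‖ = 2 * π * ‖g c‖ := by
    rw [norm_smul]
    simp [abs_of_pos pi_pos, mul_assoc]
  calc 2 * π * ‖g c‖ = ‖∮ z in C(c, ρ), (z - c)⁻¹ • g z‖ := by rw [hc, h2]
    _ ≤ ∫ θ in (0:ℝ)..(2*π), ‖deriv (circleMap c ρ) θ • (circleMap c ρ θ - c)⁻¹ • g (circleMap c ρ θ)‖ :=
        intervalIntegral.norm_integral_le_integral_norm (by positivity)
    _ = ∫ θ in (0:ℝ)..(2*π), ‖g (circleMap c ρ θ)‖ := by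
        apply intervalIntegral.integral_congr
        intro θ _
        show ‖deriv (circleMap c ρ) θ • (circleMap c ρ θ - c)⁻¹ • g (circleMap c ρ θ)‖ = _
        rw [norm_smul, norm_smul, deriv_circleMap, circleMap_sub_center, norm_inv]
        simp only [norm_mul, norm_circleMap_zero,
          Complex.norm_I, mul_one, abs_of_pos hρ]
        field_simp

/-- The sub-mean-value property of `‖g‖` for a holomorphic function `g`:
the value at the center of a closed ball is bounded by the average of `‖g‖`
over the ball. -/
private lemma submean {U : Set ℂ} {g : ℂ → ℂ} (hg : DifferentiableOn ℂ g U)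
    {c : ℂ} {r : ℝ} (hr : 0 < r) (hball : closedBall c r ⊆ U) :
    π * r ^ 2 * ‖g c‖ ≤ ∫ w in closedBall c r, ‖g w‖ := by
  set F : ℝ × ℝ → ℝ := fun p => p.1 * ‖g (c + Complex.polarCoord.symm p)‖ with hF
  set S : Set (ℝ × ℝ) := Ioc 0 r ×ˢ Ioo (-π) π with hS
  have hgc : ContinuousOn g (closedBall c r) := (hg.mono hball).continuousOn
  -- continuity of the polar parametrization
  have hφ : Continuous (fun p : ℝ × ℝ => c + Complex.polarCoord.symm p) := by
    have : (fun p : ℝ × ℝ => c + Complex.polarCoord.symm p)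
        = fun p : ℝ × ℝ => c + p.1 * (Real.cos p.2 + Real.sin p.2 * Complex.I) := by
      funext p; rw [Complex.polarCoord_symm_apply]
    rw [this]; fun_prop
  have hmaps : MapsTo (fun p : ℝ × ℝ => c + Complex.polarCoord.symm p)
      (Icc 0 r ×ˢ Icc (-π) π) (closedBall c r) := by
    intro p hp
    have : dist (c + Complex.polarCoord.symm p) c = |p.1| := by
      rw [dist_eq_norm, add_sub_cancel_left, Complex.norm_polarCoord_symm]
    rw [mem_closedBall, this, abs_of_nonneg hp.1.1]
    exact hp.1.2
  have hFcont : ContinuousOn F (Icc 0 r ×ˢ Icc (-π) π) :=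
    continuous_fst.continuousOn.mul ((hgc.comp hφ.continuousOn hmaps).norm)
  have hFi : IntegrableOn F S := by
    apply IntegrableOn.mono_set (hFcont.integrableOn_compact (isCompact_Icc.prod isCompact_Icc))
    exact prod_mono Ioc_subset_Icc_self Ioo_subset_Icc_self
  -- Step A : the area integral in polar coordinates
  set h : ℂ → ℝ := (closedBall (0:ℂ) r).indicator fun w => ‖g (c + w)‖ with hh
  have e1 : ∫ w in closedBall c r, ‖g w‖ = ∫ w, h w := by
    rw [← integral_indicator measurableSet_closedBall,
        ← integral_add_left_eq_self (fun w => (closedBall c r).indicator (fun w => ‖g w‖) w) c]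
    congr 1; funext w
    by_cases hw : w ∈ closedBall (0:ℂ) r
    · have hw' : c + w ∈ closedBall c r := by
        rwa [mem_closedBall, dist_eq_norm, add_sub_cancel_left, ← dist_zero_right]
      simp [h, indicator_of_mem hw, indicator_of_mem hw']
    · have hw' : c + w ∉ closedBall c r := by
        rwa [mem_closedBall, dist_eq_norm, add_sub_cancel_left, ← dist_zero_right]
      simp [h, indicator_of_notMem hw, indicator_of_notMem hw']
  have e2 : ∫ w, h w = ∫ p in polarCoord.target, p.1 • h (Complex.polarCoord.symm p) :=
    (Complex.integral_comp_polarCoord_symm h).symm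
  have e3 : ∫ p in polarCoord.target, p.1 • h (Complex.polarCoord.symm p) = ∫ p in S, F p := by
    have htgt : (polarCoord.target : Set (ℝ × ℝ)) = Ioi (0:ℝ) ×ˢ Ioo (-π) π := rfl
    have hcongr : ∀ p ∈ (Ioi (0:ℝ) ×ˢ Ioo (-π) π),
        p.1 • h (Complex.polarCoord.symm p) = (Iic r ×ˢ (univ : Set ℝ)).indicator F p := by
      intro p hp
      have hp1 : (0:ℝ) < p.1 := hp.1
      have habs : dist (Complex.polarCoord.symm p) 0 = p.1 := by
        rw [dist_zero_right, Complex.norm_polarCoord_symm, abs_of_pos hp1]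
      by_cases hpr : p.1 ≤ r
      · rw [indicator_of_mem (show p ∈ Iic r ×ˢ (univ : Set ℝ) from ⟨hpr, mem_univ _⟩) F,
          hh, indicator_of_mem (by rw [mem_closedBall, habs]; exact hpr)]
        simp [hF]
      · rw [indicator_of_notMem (fun hmem => hpr hmem.1),
          hh, indicator_of_notMem (by rw [mem_closedBall, habs]; exact hpr)]
        simp
    rw [htgt, setIntegral_congr_fun ((measurableSet_Ioi.prod measurableSet_Ioo)) hcongr,
      setIntegral_indicator (measurableSet_Iic.prod MeasurableSet.univ)]
    congr 1
    rw [Set.prod_inter_prod, Set.Ioi_inter_Iic, Set.inter_univ]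
  -- Step B : Fubini and the circle mean value estimate
  have hprodm : (volume : Measure (ℝ × ℝ)).restrict S
      = (volume.restrict (Ioc 0 r)).prod (volume.restrict (Ioo (-π) π)) := by
    rw [Measure.prod_restrict, Measure.volume_eq_prod]
  have hFi' : Integrable F ((volume.restrict (Ioc 0 r)).prod (volume.restrict (Ioo (-π) π))) := by
    rw [← hprodm]; exact hFi
  have hB1 : ∫ p in S, F p = ∫ ρ in Ioc (0:ℝ) r, ∫ θ in Ioo (-π) π, F (ρ, θ) := by
    rw [hprodm]; exact integral_prod F hFi'
  have hmarg : IntegrableOn (fun ρ => ∫ θ in Ioo (-π) π, F (ρ, θ)) (Ioc 0 r) :=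
    hFi'.integral_prod_left
  have hinner : ∀ ρ ∈ Ioc (0:ℝ) r, 2 * π * ‖g c‖ * ρ ≤ ∫ θ in Ioo (-π) π, F (ρ, θ) := by
    intro ρ hρ
    have hρ0 : (0:ℝ) < ρ := hρ.1
    have heq : ∫ θ in Ioo (-π) π, F (ρ, θ) = ρ * ∫ θ in Ioo (-π) π, ‖g (circleMap c ρ θ)‖ := by
      simp_rw [hF, polar_circleMap]
      exact integral_const_mul ρ _
    have hper : Function.Periodic (fun θ => ‖g (circleMap c ρ θ)‖) (2*π) := by
      intro θ; simp [periodic_circleMap c ρ θ]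
    have hcirc : 2 * π * ‖g c‖ ≤ ∫ θ in Ioo (-π) π, ‖g (circleMap c ρ θ)‖ := by
      have h1 := circle_mean hg hρ0 ((closedBall_subset_closedBall hρ.2).trans hball)
      have h2 : ∫ θ in (0:ℝ)..(2*π), ‖g (circleMap c ρ θ)‖
          = ∫ θ in Ioo (-π) π, ‖g (circleMap c ρ θ)‖ := by
        rw [show (2*π : ℝ) = 0 + 2*π by ring, ← hper.intervalIntegral_add_eq (-π) 0,
          show (-π + 2*π : ℝ) = π by ring,
          intervalIntegral.integral_of_le (by linarith [pi_pos]),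
          integral_Ioc_eq_integral_Ioo]
      linarith [h1, h2.le, h2.ge]
    calc 2 * π * ‖g c‖ * ρ ≤ (∫ θ in Ioo (-π) π, ‖g (circleMap c ρ θ)‖) * ρ :=
          mul_le_mul_of_nonneg_right hcirc hρ0.le
      _ = ∫ θ in Ioo (-π) π, F (ρ, θ) := by rw [heq]; ring
  have houter : ∫ ρ in Ioc (0:ℝ) r, 2 * π * ‖g c‖ * ρ
      ≤ ∫ ρ in Ioc (0:ℝ) r, ∫ θ in Ioo (-π) π, F (ρ, θ) := by
    apply setIntegral_mono_on _ hmarg measurableSet_Ioc hinner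
    exact (Continuous.integrableOn_Ioc (by fun_prop))
  have hlhs : ∫ ρ in Ioc (0:ℝ) r, 2 * π * ‖g c‖ * ρ = π * r ^ 2 * ‖g c‖ := by
    rw [integral_const_mul, ← intervalIntegral.integral_of_le hr.le, integral_id]
    ring
  rw [e1, e2, e3, hB1]
  rw [hlhs] at houter
  exact houter

end Auxiliary

open Metric Real in
/-- Lemma 3: if f_n are holomorphic on an open connected G ⊆ ℂ, Σ‖f_n(s)‖ converges
a.e. on G, and Φ(s) = Σ‖f_n(s)‖ is locally integrable on G, then Σ f_n converges
uniformly on compact subsets of G and its sum is holomorphic on G. -/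
theorem series_of_holomorphic (G : Set ℂ) (hG : IsOpen G) (hGc : IsConnected G)
    (f : ℕ → ℂ → ℂ) (hf : ∀ n, DifferentiableOn ℂ (f n) G)
    (hae : ∀ᵐ s ∂(volume.restrict G), Summable fun n => ‖f n s‖)
    (hloc : LocallyIntegrableOn (fun s => ∑' n, ‖f n s‖) G) :
    (∀ K ⊆ G, IsCompact K →
        TendstoUniformlyOn (fun m s => ∑ n ∈ Finset.range m, f n s)
          (fun s => ∑' n, f n s) atTop K) ∧
      DifferentiableOn ℂ (fun s => ∑' n, f n s) G := by
  have key : ∀ K ⊆ G, IsCompact K →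
      TendstoUniformlyOn (fun m s => ∑ n ∈ Finset.range m, f n s)
        (fun s => ∑' n, f n s) atTop K := by
    intro K hKG hK
    obtain ⟨r, hr, hKr⟩ := hK.exists_cthickening_subset_open hG hKG
    set K' := cthickening r K with hK'
    have hK'c : IsCompact K' := hK.cthickening
    have hball : ∀ z ∈ K, closedBall z r ⊆ K' := fun z hz => closedBall_subset_cthickening hz r
    set M : ℕ → ℝ := fun n => (π * r ^ 2)⁻¹ * ∫ w in K', ‖f n w‖ with hM
    have hInt : ∀ n, IntegrableOn (fun w => ‖f n w‖) K' :=
      fun n => ContinuousOn.integrableOn_compact hK'c (((hf n).continuousOn.mono hKr).norm)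
    have hpos : (0:ℝ) < π * r ^ 2 := by positivity
    have hbound : ∀ n, ∀ z ∈ K, ‖f n z‖ ≤ M n := by
      intro n z hz
      have h1 := submean (hf n) hr ((hball z hz).trans hKr)
      have h2 : ∫ w in closedBall z r, ‖f n w‖ ≤ ∫ w in K', ‖f n w‖ :=
        setIntegral_mono_set (hInt n)
          (Filter.Eventually.of_forall fun w => norm_nonneg _)
          ((hball z hz).eventuallyLE)
      calc ‖f n z‖ = (π * r ^ 2)⁻¹ * (π * r ^ 2 * ‖f n z‖) := by field_simp
        _ ≤ M n := mul_le_mul_of_nonneg_left (h1.trans h2) (inv_nonneg.2 hpos.le)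
    have hΦ : IntegrableOn (fun s => ∑' n, ‖f n s‖) K' :=
      (hloc.mono_set hKr).integrableOn_isCompact hK'c
    have haeK' : ∀ᵐ s ∂(volume.restrict K'), Summable fun n => ‖f n s‖ :=
      ae_restrict_of_ae_restrict_of_subset hKr hae
    have hsum_int : Summable (fun n => ∫ w in K', ‖f n w‖) := by
      apply summable_of_sum_range_le
        (fun n => integral_nonneg fun w => norm_nonneg _)
      intro m
      rw [← integral_finset_sum _ (fun i _ => hInt i)]
      apply integral_mono_ae (integrable_finset_sum _ fun i _ => hInt i) hΦ
      filter_upwards [haeK'] with s hs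
      exact Summable.sum_le_tsum (Finset.range m) (fun i _ => norm_nonneg _) hs
    exact tendstoUniformlyOn_tsum_nat (hsum_int.mul_left _) hbound
  refine ⟨key, ?_⟩
  have hlu : TendstoLocallyUniformlyOn (fun m s => ∑ n ∈ Finset.range m, f n s)
      (fun s => ∑' n, f n s) atTop G :=
    (tendstoLocallyUniformlyOn_iff_forall_isCompact hG).2 key
  exact hlu.differentiableOn
    (Filter.Eventually.of_forall fun m => DifferentiableOn.fun_sum fun i _ => hf i) hG
end

section
/- Let (a_n), (b_n) be complex sequences and d_n = Σ_{d|n, d≤X} b_d a_{n/d} for a real parameter X ≥ 1. Suppose Σ|a_n|² n^{-2(σ-ε)} = C < ∞ and Σ_{n>X} |b_n|² n^{-2σ+2ε} =: R(X) < ∞ for some ε > 0 with σ - ε fixed, and suppose Σ_{d|n} b_d a_{n/d} = 0 for all n > 1. Then Σ_{n>X} |d_n|² n^{-2σ} ≤ c(ε) · C · R(X) for a constant c(ε) depending only on ε; in particular Σ_{n>X} |d_n|² n^{-2σ} → 0 as X → ∞. -/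
open Filter


lemma exp_aux {t : ℝ} (ht : 0 < t) (a : ℕ) :
    (a + 1 : ℝ) ≤ (8 / t ^ 2 + 1) * Real.exp (t * a) := by
  have hK0 : (0:ℝ) ≤ 8 / t ^ 2 := by positivity
  rcases Nat.eq_zero_or_pos a with rfl | ha
  · simp [Real.exp_nonneg]; nlinarith [Real.exp_pos (0:ℝ)]
  · have ha1 : (1 : ℝ) ≤ a := by exact_mod_cast ha
    have h1 : (1 : ℝ) + t * a / 2 ≤ Real.exp (t * a / 2) := by
      have := Real.add_one_le_exp (t * a / 2); linarith
    have h2 : Real.exp (t * a) = Real.exp (t * a / 2) ^ 2 := by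
      rw [← Real.exp_nat_mul]; ring_nf
    have h3 : (1 + t * a / 2) ^ 2 ≤ Real.exp (t * a / 2) ^ 2 :=
      pow_le_pow_left₀ (by positivity) h1 2
    have e1 : t ^ 2 * (a:ℝ) ^ 2 / 4 ≤ Real.exp (t * a) := by nlinarith
    have e2 : (8 / t ^ 2) * (t ^ 2 * (a:ℝ) ^ 2 / 4) ≤ (8 / t ^ 2) * Real.exp (t * a) :=
      mul_le_mul_of_nonneg_left e1 hK0
    have e3 : (8 / t ^ 2) * (t ^ 2 * (a:ℝ) ^ 2 / 4) = 2 * (a:ℝ) ^ 2 := by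
      field_simp; ring
    nlinarith [Real.exp_pos (t * (a:ℝ)),
      mul_nonneg (sub_nonneg.2 ha1) (by positivity : (0:ℝ) ≤ 2 * (a:ℝ) + 1)]

/-- divisor bound : τ(n) ≤ c · n^δ with c depending only on δ. -/
lemma divisor_bound {δ : ℝ} (hδ : 0 < δ) :
    ∃ c : ℝ, 1 ≤ c ∧ ∀ n : ℕ, n ≠ 0 → (n.divisors.card : ℝ) ≤ c * (n : ℝ) ^ δ := by
  set t : ℝ := δ * Real.log 2 with ht_def
  have ht : 0 < t := mul_pos hδ (Real.log_pos one_lt_two)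
  set K : ℝ := 8 / t ^ 2 + 1 with hK_def
  have hK1 : (1 : ℝ) ≤ K := le_add_of_nonneg_left (by positivity)
  set M : ℕ := ⌈(2 : ℝ) ^ (1 / δ)⌉₊ with hM_def
  refine ⟨K ^ M, one_le_pow₀ hK1, fun n hn => ?_⟩
  -- per-prime bounds
  have key : ∀ p ∈ n.primeFactors,
      ((n.factorization p : ℝ) + 1) ≤ (if (p : ℝ) ^ δ < 2 then K else 1)
        * (p : ℝ) ^ ((n.factorization p : ℝ) * δ) := by
    intro p hp
    set a : ℕ := n.factorization p
    have hp2 : 2 ≤ p := (Nat.prime_of_mem_primeFactors hp).two_le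
    have hp2R : (2 : ℝ) ≤ (p : ℝ) := by exact_mod_cast hp2
    have hp0 : (0 : ℝ) < p := by linarith
    split_ifs with hbad
    · have h1 : (2 : ℝ) ^ ((a : ℝ) * δ) ≤ (p : ℝ) ^ ((a : ℝ) * δ) :=
        Real.rpow_le_rpow (by norm_num) hp2R (by positivity)
      have h2 : (2 : ℝ) ^ ((a : ℝ) * δ) = Real.exp (t * a) := by
        rw [Real.rpow_def_of_pos (by norm_num)]
        congr 1; rw [ht_def]; ring
      calc ((a : ℝ) + 1) ≤ K * Real.exp (t * a) := exp_aux ht a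
        _ = K * (2 : ℝ) ^ ((a : ℝ) * δ) := by rw [h2]
        _ ≤ K * (p : ℝ) ^ ((a : ℝ) * δ) :=
            mul_le_mul_of_nonneg_left h1 (by positivity)
    · push_neg at hbad
      have h1 : (p : ℝ) ^ ((a : ℝ) * δ) = ((p : ℝ) ^ δ) ^ a := by
        rw [← Real.rpow_natCast ((p:ℝ) ^ δ) a, ← Real.rpow_mul (le_of_lt hp0)]
        ring_nf
      have h2 : ((2 : ℝ)) ^ a ≤ ((p : ℝ) ^ δ) ^ a := pow_le_pow_left₀ (by norm_num) hbad a
      have h3 : ((a : ℝ) + 1) ≤ (2 : ℝ) ^ a := by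
        have h := @Nat.lt_two_pow_self a
        have h' : (a + 1 : ℕ) ≤ 2 ^ a := h
        exact_mod_cast h'
      rw [one_mul, h1]
      linarith
  -- product manipulations
  have hcard : (n.divisors.card : ℝ) = ∏ p ∈ n.primeFactors, ((n.factorization p : ℝ) + 1) := by
    rw [Nat.card_divisors hn]; push_cast; rfl
  have hnat : ∏ p ∈ n.primeFactors, p ^ n.factorization p = n := by
    rw [← Nat.support_factorization]
    exact Nat.factorization_prod_pow_eq_self hn
  have hnprod : (n : ℝ) ^ δ = ∏ p ∈ n.primeFactors, (p : ℝ) ^ ((n.factorization p : ℝ) * δ) := by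
    conv_lhs => rw [← hnat]
    push_cast
    rw [← Real.finset_prod_rpow _ _ (fun p _ => by positivity) δ]
    refine Finset.prod_congr rfl fun p hp => ?_
    rw [← Real.rpow_natCast (p:ℝ) (n.factorization p), ← Real.rpow_mul (by positivity)]
  rw [hcard, hnprod]
  have hw : ∀ p ∈ n.primeFactors, (0:ℝ) ≤ (p : ℝ) ^ ((n.factorization p : ℝ) * δ) := by
    intro p hp; positivity
  calc ∏ p ∈ n.primeFactors, ((n.factorization p : ℝ) + 1)
      ≤ ∏ p ∈ n.primeFactors, ((if (p : ℝ) ^ δ < 2 then K else 1)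
          * (p : ℝ) ^ ((n.factorization p : ℝ) * δ)) := by
        refine Finset.prod_le_prod (fun p hp => by positivity) key
    _ = (∏ p ∈ n.primeFactors, (if (p : ℝ) ^ δ < 2 then K else 1))
          * ∏ p ∈ n.primeFactors, (p : ℝ) ^ ((n.factorization p : ℝ) * δ) :=
        Finset.prod_mul_distrib
    _ ≤ K ^ M * ∏ p ∈ n.primeFactors, (p : ℝ) ^ ((n.factorization p : ℝ) * δ) := by
        refine mul_le_mul_of_nonneg_right ?_ (Finset.prod_nonneg hw)
        rw [Finset.prod_ite, Finset.prod_const, Finset.prod_const, one_pow, mul_one]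
        have hsub : (n.primeFactors.filter fun p : ℕ => (p : ℝ) ^ δ < 2) ⊆ Finset.range M := by
          intro p hp
          rw [Finset.mem_filter] at hp
          rw [Finset.mem_range, hM_def, Nat.lt_ceil]
          have hp0 : (0:ℝ) ≤ (p:ℝ) := Nat.cast_nonneg p
          have h := Real.rpow_lt_rpow (by positivity) hp.2 (by positivity : (0:ℝ) < 1/δ)
          rwa [← Real.rpow_mul hp0, mul_one_div_cancel hδ.ne', Real.rpow_one] at h
        have hcard' : (n.primeFactors.filter fun p : ℕ => (p : ℝ) ^ δ < 2).card ≤ M := by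
          simpa using Finset.card_le_card hsub
        exact pow_le_pow_right₀ hK1 hcard'



/-- Rearrangement: sum over n of the Dirichlet-convolution terms equals product of sums,
for nonnegative summable sequences vanishing at 0. -/
lemma conv_hasSum (B A : ℕ → ℝ) (hB0 : B 0 = 0) (hA0 : A 0 = 0)
    (hB : Summable B) (hA : Summable A) (hBn : ∀ k, 0 ≤ B k) (hAn : ∀ k, 0 ≤ A k) :
    HasSum (fun n : ℕ => ∑ p ∈ n.divisorsAntidiagonal, B p.1 * A p.2)
      ((∑' k, B k) * (∑' k, A k)) := by
  have hBnorm : Summable (fun k => ‖B k‖) := by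
    simpa [Real.norm_eq_abs, abs_of_nonneg (hBn _)] using hB
  have hAnorm : Summable (fun k => ‖A k‖) := by
    simpa [Real.norm_eq_abs, abs_of_nonneg (hAn _)] using hA
  have hF : Summable (fun p : ℕ × ℕ => B p.1 * A p.2) :=
    summable_mul_of_summable_norm hBnorm hAnorm
  have hFs : HasSum (fun p : ℕ × ℕ => B p.1 * A p.2) ((∑' k, B k) * (∑' k, A k)) := by
    rw [tsum_mul_tsum_of_summable_norm hBnorm hAnorm]
    exact hF.hasSum
  have key := hFs.tsum_fiberwise (fun p => p.1 * p.2)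
  have heq : (fun n : ℕ => ∑' p : (fun p : ℕ × ℕ => p.1 * p.2) ⁻¹' {n}, B p.val.1 * A p.val.2)
      = fun n : ℕ => ∑ p ∈ n.divisorsAntidiagonal, B p.1 * A p.2 := by
    funext n
    rcases eq_or_ne n 0 with rfl | hn
    · rw [Nat.divisorsAntidiagonal_zero, Finset.sum_empty]
      have hz : ∀ p : (fun p : ℕ × ℕ => p.1 * p.2) ⁻¹' {(0:ℕ)}, B p.val.1 * A p.val.2 = 0 := by
        rintro ⟨⟨p₁, p₂⟩, hp⟩
        simp only [Set.mem_preimage, Set.mem_singleton_iff, Nat.mul_eq_zero] at hp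
        rcases hp with rfl | rfl
        · simp [hB0]
        · simp [hA0]
      simp only [hz, tsum_zero]
    · rw [show (fun p : ℕ × ℕ => p.1 * p.2) ⁻¹' {n} = ↑n.divisorsAntidiagonal by
        ext p; simp [Nat.mem_divisorsAntidiagonal, hn],
        Finset.tsum_subtype' n.divisorsAntidiagonal (fun p => B p.1 * A p.2)]
  rwa [heq] at key



lemma pointwise_bound (a b : ℕ → ℂ) (σ ε X c₀ : ℝ) (hX : 1 ≤ X)
    (hc₀ : ∀ k : ℕ, k ≠ 0 → (k.divisors.card : ℝ) ≤ c₀ * (k : ℝ) ^ (2 * ε))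
    (hconv : ∀ n : ℕ, 1 < n → ∑ d ∈ n.divisors, b d * a (n / d) = 0)
    (n : ℕ) (hn : X < ((n + 1 : ℕ) : ℝ)) :
    ‖∑ d ∈ (n + 1).divisors.filter fun d : ℕ => (d : ℝ) ≤ X,
        b d * a ((n + 1) / d)‖ ^ 2 * ((n + 1 : ℕ) : ℝ) ^ (-2 * σ) ≤
      c₀ * ∑ d ∈ (n + 1).divisors,
        (if X < (d : ℝ) then ‖b d‖ ^ 2 * (d : ℝ) ^ (-2 * σ + 2 * ε) else 0) *
        (if ((n + 1) / d : ℕ) = 0 then 0 else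
          ‖a ((n + 1) / d)‖ ^ 2 * ((((n + 1) / d : ℕ)) : ℝ) ^ (-2 * σ + 2 * ε)) := by
  set N : ℕ := n + 1 with hN_def
  have hN1 : 1 < N := by
    have : (1 : ℝ) < (N : ℝ) := lt_of_le_of_lt hX hn
    exact_mod_cast this
  have hN0 : N ≠ 0 := by omega
  have hNR : (0 : ℝ) < (N : ℝ) := by positivity
  set T : Finset ℕ := N.divisors.filter (fun d : ℕ => ¬((d : ℝ) ≤ X)) with hT_def
  -- step a: flip the sum using the convolution identity
  have hsplit : ∑ d ∈ N.divisors.filter (fun d : ℕ => (d : ℝ) ≤ X), b d * a (N / d)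
      = -∑ d ∈ T, b d * a (N / d) := by
    have h := Finset.sum_filter_add_sum_filter_not N.divisors (fun d : ℕ => (d : ℝ) ≤ X)
      (fun d => b d * a (N / d))
    rw [hconv N hN1] at h
    linear_combination h
  -- step b: Cauchy-Schwarz
  set q : ℕ → ℝ := fun d => (‖b d‖ * ‖a (N / d)‖) ^ 2 with hq_def
  have hCS : ‖∑ d ∈ T, b d * a (N / d)‖ ^ 2 ≤ (T.card : ℝ) * ∑ d ∈ T, q d := by
    have h1 : ‖∑ d ∈ T, b d * a (N / d)‖ ≤ ∑ d ∈ T, ‖b d‖ * ‖a (N / d)‖ := by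
      refine (norm_sum_le _ _).trans_eq ?_
      exact Finset.sum_congr rfl fun d _ => norm_mul _ _
    have h2 : ‖∑ d ∈ T, b d * a (N / d)‖ ^ 2 ≤ (∑ d ∈ T, ‖b d‖ * ‖a (N / d)‖) ^ 2 :=
      pow_le_pow_left₀ (norm_nonneg _) h1 2
    refine h2.trans ?_
    exact sq_sum_le_card_mul_sum_sq
  have hcard : (T.card : ℝ) ≤ c₀ * (N : ℝ) ^ (2 * ε) := by
    refine le_trans ?_ (hc₀ N hN0)
    have hsub : T ⊆ N.divisors := Finset.filter_subset _ _
    exact_mod_cast Finset.card_le_card hsub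
  have hqnonneg : ∀ d ∈ T, (0:ℝ) ≤ q d := fun d _ => sq_nonneg _
  have hsumq : (0:ℝ) ≤ ∑ d ∈ T, q d := Finset.sum_nonneg hqnonneg
  have hw : (0:ℝ) ≤ (N : ℝ) ^ (-2 * σ) := Real.rpow_nonneg hNR.le _
  -- per-term identity on T
  have hterm : ∀ d ∈ T, q d * ((N : ℝ) ^ (2 * ε) * (N : ℝ) ^ (-2 * σ))
      = (if X < (d : ℝ) then ‖b d‖ ^ 2 * (d : ℝ) ^ (-2 * σ + 2 * ε) else 0) *
        (if (N / d : ℕ) = 0 then 0 else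
          ‖a (N / d)‖ ^ 2 * (((N / d : ℕ)) : ℝ) ^ (-2 * σ + 2 * ε)) := by
    intro d hd
    rw [hT_def, Finset.mem_filter, Nat.mem_divisors] at hd
    obtain ⟨⟨hdvd, -⟩, hXd⟩ := hd
    rw [not_le] at hXd
    have hd0 : d ≠ 0 := by
      rintro rfl
      simp at hXd; linarith
    set m : ℕ := N / d with hm_def
    have hdm : d * m = N := Nat.mul_div_cancel' hdvd
    have hm0 : m ≠ 0 := by
      intro h
      rw [h, mul_zero] at hdm; exact hN0 hdm.symm
    rw [if_pos hXd, if_neg hm0]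
    have hrpow : (N : ℝ) ^ (2 * ε) * (N : ℝ) ^ (-2 * σ)
        = (d : ℝ) ^ (-2 * σ + 2 * ε) * (m : ℝ) ^ (-2 * σ + 2 * ε) := by
      rw [← Real.rpow_add hNR, ← Real.mul_rpow (Nat.cast_nonneg d) (Nat.cast_nonneg m)]
      rw [show ((d : ℝ) * (m : ℝ)) = (N : ℝ) by exact_mod_cast congrArg Nat.cast hdm]
      congr 1; ring
    rw [hq_def, hrpow]
    ring
  -- assemble
  calc ‖∑ d ∈ N.divisors.filter fun d : ℕ => (d : ℝ) ≤ X, b d * a (N / d)‖ ^ 2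
        * (N : ℝ) ^ (-2 * σ)
      = ‖∑ d ∈ T, b d * a (N / d)‖ ^ 2 * (N : ℝ) ^ (-2 * σ) := by rw [hsplit, norm_neg]
    _ ≤ ((T.card : ℝ) * ∑ d ∈ T, q d) * (N : ℝ) ^ (-2 * σ) :=
        mul_le_mul_of_nonneg_right hCS hw
    _ ≤ ((c₀ * (N : ℝ) ^ (2 * ε)) * ∑ d ∈ T, q d) * (N : ℝ) ^ (-2 * σ) :=
        mul_le_mul_of_nonneg_right (mul_le_mul_of_nonneg_right hcard hsumq) hw
    _ = c₀ * ∑ d ∈ T, q d * ((N : ℝ) ^ (2 * ε) * (N : ℝ) ^ (-2 * σ)) := by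
        rw [← Finset.sum_mul]; ring
    _ = c₀ * ∑ d ∈ T,
        (if X < (d : ℝ) then ‖b d‖ ^ 2 * (d : ℝ) ^ (-2 * σ + 2 * ε) else 0) *
        (if (N / d : ℕ) = 0 then 0 else
          ‖a (N / d)‖ ^ 2 * (((N / d : ℕ)) : ℝ) ^ (-2 * σ + 2 * ε)) := by
        rw [Finset.sum_congr rfl hterm]
    _ ≤ c₀ * ∑ d ∈ N.divisors,
        (if X < (d : ℝ) then ‖b d‖ ^ 2 * (d : ℝ) ^ (-2 * σ + 2 * ε) else 0) *
        (if (N / d : ℕ) = 0 then 0 else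
          ‖a (N / d)‖ ^ 2 * (((N / d : ℕ)) : ℝ) ^ (-2 * σ + 2 * ε)) := by
        have hc₀0 : (0:ℝ) ≤ c₀ := by
          have h1 := hc₀ 1 one_ne_zero
          simp [Nat.divisors_one] at h1
          nlinarith [Real.rpow_nonneg (le_refl (0:ℝ)) (2*ε)]
        refine mul_le_mul_of_nonneg_left ?_ hc₀0
        refine Finset.sum_le_sum_of_subset_of_nonneg (Finset.filter_subset _ _) ?_
        intro d _ _
        refine mul_nonneg ?_ ?_ <;> split_ifs <;> positivity



section
variable (a b : ℕ → ℂ) (σ ε X : ℝ)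

lemma main_bound (a b : ℕ → ℂ) (σ ε X c₀ : ℝ) (hε : 0 < ε) (hX : 1 ≤ X) (hc₀1 : 1 ≤ c₀)
    (hc₀ : ∀ k : ℕ, k ≠ 0 → (k.divisors.card : ℝ) ≤ c₀ * (k : ℝ) ^ (2 * ε))
    (hC : Summable fun n : ℕ => ‖a (n + 1)‖ ^ 2 * ((n + 1 : ℕ) : ℝ) ^ (-2 * (σ - ε)))
    (hR : Summable fun n : ℕ => ‖b (n + 1)‖ ^ 2 * ((n + 1 : ℕ) : ℝ) ^ (-2 * σ + 2 * ε))
    (hconv : ∀ n : ℕ, 1 < n → ∑ d ∈ n.divisors, b d * a (n / d) = 0) :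
    Summable (fun n : ℕ => if X < ((n + 1 : ℕ) : ℝ) then
        ‖∑ d ∈ (n + 1).divisors.filter fun d : ℕ => (d : ℝ) ≤ X,
            b d * a ((n + 1) / d)‖ ^ 2 * ((n + 1 : ℕ) : ℝ) ^ (-2 * σ) else 0) ∧
    (∑' n : ℕ, if X < ((n + 1 : ℕ) : ℝ) then
        ‖∑ d ∈ (n + 1).divisors.filter fun d : ℕ => (d : ℝ) ≤ X,
            b d * a ((n + 1) / d)‖ ^ 2 * ((n + 1 : ℕ) : ℝ) ^ (-2 * σ) else 0) ≤
      c₀ * (∑' n : ℕ, ‖a (n + 1)‖ ^ 2 * ((n + 1 : ℕ) : ℝ) ^ (-2 * (σ - ε))) *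
        (∑' n : ℕ, if X < ((n + 1 : ℕ) : ℝ) then
          ‖b (n + 1)‖ ^ 2 * ((n + 1 : ℕ) : ℝ) ^ (-2 * σ + 2 * ε) else 0) := by
  classical
  set A : ℕ → ℝ := fun m => if m = 0 then 0 else ‖a m‖ ^ 2 * (m : ℝ) ^ (-2 * σ + 2 * ε)
    with hA_def
  set B : ℕ → ℝ := fun k => if X < (k : ℝ) then ‖b k‖ ^ 2 * (k : ℝ) ^ (-2 * σ + 2 * ε) else 0
    with hB_def
  have hA0 : A 0 = 0 := by simp [hA_def]
  have hB0 : B 0 = 0 := by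
    simp only [hB_def, Nat.cast_zero]
    rw [if_neg (by linarith)]
  have hAnn : ∀ k, 0 ≤ A k := by
    intro k; rw [hA_def]; dsimp only; split_ifs <;> positivity
  have hBnn : ∀ k, 0 ≤ B k := by
    intro k; rw [hB_def]; dsimp only; split_ifs <;> positivity
  have hA_shift : ∀ n : ℕ, A (n + 1) = ‖a (n + 1)‖ ^ 2 * ((n + 1 : ℕ) : ℝ) ^ (-2 * (σ - ε)) := by
    intro n
    have he : -2 * σ + 2 * ε = -2 * (σ - ε) := by ring
    show (if (n + 1 : ℕ) = 0 then (0:ℝ)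
      else ‖a (n + 1)‖ ^ 2 * ((n + 1 : ℕ) : ℝ) ^ (-2 * σ + 2 * ε)) = _
    rw [if_neg (Nat.succ_ne_zero n), he]
  have hB_shift : ∀ n : ℕ, B (n + 1)
      = if X < ((n + 1 : ℕ) : ℝ) then ‖b (n + 1)‖ ^ 2 * ((n + 1 : ℕ) : ℝ) ^ (-2 * σ + 2 * ε)
        else 0 := by
    intro n; rfl
  have hA_sum : Summable A := by
    rw [← summable_nat_add_iff 1]
    exact hC.congr fun n => (hA_shift n).symm
  have hB_sum : Summable B := by
    rw [← summable_nat_add_iff 1]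
    refine Summable.of_nonneg_of_le (fun n => hBnn _) (fun n => ?_) hR
    rw [hB_shift]
    split_ifs
    · exact le_refl _
    · positivity
  -- convolution rearrangement
  have hH := conv_hasSum B A hB0 hA0 hB_sum hA_sum hBnn hAnn
  set H : ℕ → ℝ := fun n : ℕ => ∑ p ∈ n.divisorsAntidiagonal, B p.1 * A p.2 with hH_def
  have hHnn : ∀ n, 0 ≤ H n := fun n =>
    Finset.sum_nonneg fun p _ => mul_nonneg (hBnn _) (hAnn _)
  have hH0 : H 0 = 0 := by simp [hH_def]
  -- key pointwise bound
  have key : ∀ n : ℕ, (if X < ((n + 1 : ℕ) : ℝ) then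
      ‖∑ d ∈ (n + 1).divisors.filter fun d : ℕ => (d : ℝ) ≤ X,
          b d * a ((n + 1) / d)‖ ^ 2 * ((n + 1 : ℕ) : ℝ) ^ (-2 * σ) else 0)
      ≤ c₀ * H (n + 1) := by
    intro n
    split_ifs with h
    · have hpb := pointwise_bound a b σ ε X c₀ hX hc₀ hconv n h
      refine hpb.trans_eq ?_
      have h4 : H (n + 1) = ∑ d ∈ (n + 1).divisors, B d * A ((n + 1) / d) :=
        Nat.sum_divisorsAntidiagonal (fun d m => B d * A m)
      rw [h4]
    · exact mul_nonneg (by linarith) (hHnn _)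
  have hHs : Summable (fun n : ℕ => c₀ * H (n + 1)) :=
    (((summable_nat_add_iff 1).mpr hH.summable)).mul_left c₀
  have hLHS_nonneg : ∀ n : ℕ, (0:ℝ) ≤ (if X < ((n + 1 : ℕ) : ℝ) then
      ‖∑ d ∈ (n + 1).divisors.filter fun d : ℕ => (d : ℝ) ≤ X,
          b d * a ((n + 1) / d)‖ ^ 2 * ((n + 1 : ℕ) : ℝ) ^ (-2 * σ) else 0) := by
    intro n; split_ifs <;> positivity
  have hLHS_sum : Summable (fun n : ℕ => if X < ((n + 1 : ℕ) : ℝ) then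
      ‖∑ d ∈ (n + 1).divisors.filter fun d : ℕ => (d : ℝ) ≤ X,
          b d * a ((n + 1) / d)‖ ^ 2 * ((n + 1 : ℕ) : ℝ) ^ (-2 * σ) else 0) :=
    Summable.of_nonneg_of_le hLHS_nonneg key hHs
  refine ⟨hLHS_sum, ?_⟩
  have step1 := hLHS_sum.tsum_le_tsum key hHs
  refine step1.trans ?_
  have step2 : ∑' n : ℕ, c₀ * H (n + 1) = c₀ * ((∑' k, B k) * (∑' k, A k)) := by
    rw [tsum_mul_left]
    congr 1
    have h3 := hH.summable.tsum_eq_zero_add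
    rw [hH0, zero_add] at h3
    rw [← h3, hH.tsum_eq]
  rw [step2]
  have hAts : (∑' k, A k) = ∑' n : ℕ, ‖a (n + 1)‖ ^ 2 * ((n + 1 : ℕ) : ℝ) ^ (-2 * (σ - ε)) := by
    rw [hA_sum.tsum_eq_zero_add, hA0, zero_add]
    exact tsum_congr hA_shift
  have hBts : (∑' k, B k) = ∑' n : ℕ, (if X < ((n + 1 : ℕ) : ℝ) then
      ‖b (n + 1)‖ ^ 2 * ((n + 1 : ℕ) : ℝ) ^ (-2 * σ + 2 * ε) else 0) := by
    rw [hB_sum.tsum_eq_zero_add, hB0, zero_add]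
  rw [hAts, hBts]
  exact le_of_eq (by ring)

end





lemma tail_bound {r : ℕ → ℝ} (hr : Summable r) (hrnn : ∀ n, 0 ≤ r n) {X : ℝ} (hX : 0 ≤ X) :
    (∑' n : ℕ, if X < ((n + 1 : ℕ) : ℝ) then r n else 0) ≤ ∑' k : ℕ, r (k + ⌊X⌋₊) := by
  classical
  set N : ℕ := ⌊X⌋₊ with hN_def
  set g : ℕ → ℝ := fun n => if N ≤ n then r n else 0 with hg_def
  have hgnn : ∀ n, 0 ≤ g n := fun n => by rw [hg_def]; dsimp only; split_ifs; exacts [hrnn n, le_refl 0]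
  have hg_le : ∀ n, g n ≤ r n := fun n => by
    rw [hg_def]; dsimp only; split_ifs; exacts [le_refl _, hrnn n]
  have hg_sum : Summable g := Summable.of_nonneg_of_le hgnn hg_le hr
  have hf_le : ∀ n : ℕ, (if X < ((n + 1 : ℕ) : ℝ) then r n else 0) ≤ g n := by
    intro n
    split_ifs with h
    · have hNX : (N : ℝ) ≤ X := Nat.floor_le hX
      have : (N : ℝ) < ((n + 1 : ℕ) : ℝ) := lt_of_le_of_lt hNX h
      have hNn : N ≤ n := by exact_mod_cast Nat.lt_succ_iff.mp (by exact_mod_cast this)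
      rw [hg_def]; dsimp only; rw [if_pos hNn]
    · exact hgnn n
  have hf_sum : Summable (fun n : ℕ => if X < ((n + 1 : ℕ) : ℝ) then r n else 0) :=
    Summable.of_nonneg_of_le (fun n => by split_ifs; exacts [hrnn n, le_refl 0]) hf_le hg_sum
  refine (hf_sum.tsum_le_tsum hf_le hg_sum).trans ?_
  have hsplit := (hg_sum.sum_add_tsum_nat_add N).symm
  have hzero : ∑ i ∈ Finset.range N, g i = 0 := by
    refine Finset.sum_eq_zero fun i hi => ?_
    rw [Finset.mem_range] at hi
    rw [hg_def]; dsimp only; rw [if_neg (by omega)]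
  rw [hsplit, hzero, zero_add]
  refine le_of_eq (tsum_congr fun k => ?_)
  rw [hg_def]; dsimp only; rw [if_pos (Nat.le_add_left N k)]


/-- With dₙ = Σ_{d|n, d≤X} b_d a_{n/d}, if Σ|aₙ|² n^{-2(σ-ε)} = C < ∞,
Σ_{n>X}|bₙ|² n^{-2σ+2ε} = R(X) < ∞ and Σ_{d|n} b_d a_{n/d} = 0 for all n > 1, then
Σ_{n>X} |dₙ|² n^{-2σ} ≤ c(ε)·C·R(X) with c(ε) depending only on ε; in particular
Σ_{n>X} |dₙ|² n^{-2σ} → 0 as X → ∞. -/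
theorem mollifier_tail_bound (a b : ℕ → ℂ) (σ ε : ℝ) (hε : 0 < ε)
    (hC : Summable fun n : ℕ => ‖a (n + 1)‖ ^ 2 * ((n + 1 : ℕ) : ℝ) ^ (-2 * (σ - ε)))
    (hR : Summable fun n : ℕ => ‖b (n + 1)‖ ^ 2 * ((n + 1 : ℕ) : ℝ) ^ (-2 * σ + 2 * ε))
    (hconv : ∀ n : ℕ, 1 < n → ∑ d ∈ n.divisors, b d * a (n / d) = 0) :
    (∃ c : ℝ, 0 < c ∧ ∀ X : ℝ, 1 ≤ X →
        (∑' n : ℕ, if X < ((n + 1 : ℕ) : ℝ) then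
            ‖∑ d ∈ (n + 1).divisors.filter fun d : ℕ => (d : ℝ) ≤ X,
                b d * a ((n + 1) / d)‖ ^ 2 * ((n + 1 : ℕ) : ℝ) ^ (-2 * σ) else 0) ≤
          c * (∑' n : ℕ, ‖a (n + 1)‖ ^ 2 * ((n + 1 : ℕ) : ℝ) ^ (-2 * (σ - ε))) *
            (∑' n : ℕ, if X < ((n + 1 : ℕ) : ℝ) then
              ‖b (n + 1)‖ ^ 2 * ((n + 1 : ℕ) : ℝ) ^ (-2 * σ + 2 * ε) else 0)) ∧
      Tendsto
        (fun X : ℝ =>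
          ∑' n : ℕ, if X < ((n + 1 : ℕ) : ℝ) then
            ‖∑ d ∈ (n + 1).divisors.filter fun d : ℕ => (d : ℝ) ≤ X,
                b d * a ((n + 1) / d)‖ ^ 2 * ((n + 1 : ℕ) : ℝ) ^ (-2 * σ) else 0)
        atTop (nhds 0) := by
  obtain ⟨c₀, hc₀1, hc₀⟩ := divisor_bound (mul_pos two_pos hε)
  have hbound := fun (X : ℝ) (hX : 1 ≤ X) =>
    main_bound a b σ ε X c₀ hε hX hc₀1 hc₀ hC hR hconv
  refine ⟨⟨c₀, by linarith, fun X hX => (hbound X hX).2⟩, ?_⟩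
  -- the limit
  set r : ℕ → ℝ := fun n => ‖b (n + 1)‖ ^ 2 * ((n + 1 : ℕ) : ℝ) ^ (-2 * σ + 2 * ε) with hr_def
  have hrnn : ∀ n, 0 ≤ r n := fun n => by rw [hr_def]; positivity
  set Csum : ℝ := ∑' n : ℕ, ‖a (n + 1)‖ ^ 2 * ((n + 1 : ℕ) : ℝ) ^ (-2 * (σ - ε)) with hCs_def
  have hCs0 : 0 ≤ Csum := tsum_nonneg fun n => by positivity
  have hupper : Tendsto (fun X : ℝ => (c₀ * Csum) * ∑' k : ℕ, r (k + ⌊X⌋₊)) atTop (nhds 0) := by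
    have h1 : Tendsto (fun X : ℝ => ∑' k : ℕ, r (k + ⌊X⌋₊)) atTop (nhds 0) :=
      (tendsto_sum_nat_add r).comp tendsto_nat_floor_atTop
    have h2 := h1.const_mul (c₀ * Csum)
    simpa using h2
  refine tendsto_of_tendsto_of_tendsto_of_le_of_le' tendsto_const_nhds hupper ?_ ?_
  · filter_upwards with X
    exact tsum_nonneg fun n => by split_ifs <;> positivity
  · filter_upwards [eventually_ge_atTop (1:ℝ)] with X hX
    refine ((hbound X hX).2).trans ?_
    rw [mul_assoc, mul_assoc]
    refine mul_le_mul_of_nonneg_left ?_ (by linarith)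
    refine mul_le_mul_of_nonneg_left ?_ hCs0
    exact tail_bound hR hrnn (by linarith)
end
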